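/- Let λ > 0, a > 0, k ≥ 1 a natural number, c₀, c₁ ∈ ℝ, and let f : [0,a] → ℝ be continuous. Define u : [0,a] → ℝ by u(x) = cosh(√λ x)·c₀ + (sinh(√λ x)/√λ)·c₁ + ∫₀ˣ (sinh(√λ (x−ξ))/√λ)·f(ξ) dξ. Then for every x ∈ [0,a], λᵏ·e^{2√λ (a−x)}·( u(x) + u'(x)/√λ )² ≤ 3·λᵏ·u(a)² + 3·λ^{k−1}·u'(a)² + 3·λ^{k−1}·( ∫ₓᵃ e^{√λ (a−ξ)}·f(ξ) dξ )². -/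

import Mathlib

open MeasureTheory Set

private lemma ftc_helper {a : ℝ} (g : ℝ → ℝ) (hg : ContinuousOn g (Icc 0 a))
    {x : ℝ} (hx : x ∈ Icc (0:ℝ) a) :
    HasDerivWithinAt (fun y => ∫ t in (0:ℝ)..y, g t) (g x) (Icc 0 a) x := by
  haveI : Fact (x ∈ Icc (0:ℝ) a) := ⟨hx⟩
  have hint : IntervalIntegrable g volume 0 x := by
    apply (hg.mono ?_).intervalIntegrable
    rw [uIcc_of_le hx.1]
    exact Icc_subset_Icc le_rfl hx.2
  exact intervalIntegral.integral_hasDerivWithinAt_right hint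
    (hg.stronglyMeasurableAtFilter_nhdsWithin measurableSet_Icc x)
    (hg x hx)

private lemma three_term (p q r : ℝ) : (p + q - r) ^ 2 ≤ 3 * p ^ 2 + 3 * q ^ 2 + 3 * r ^ 2 := by
  nlinarith [sq_nonneg (p - q), sq_nonneg (p + r), sq_nonneg (q - r)]

set_option maxHeartbeats 1000000 in
/-- Per-mode three-term bound (2.6) in the derivation of the regularity bound. -/
theorem stmt_5 (lam a : ℝ) (hlam : 0 < lam) (ha : 0 < a) (k : ℕ) (hk : 1 ≤ k)
    (c₀ c₁ : ℝ) (f : ℝ → ℝ) (hf : ContinuousOn f (Icc 0 a))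
    (u u' : ℝ → ℝ)
    (hu : ∀ x, u x =
      Real.cosh (Real.sqrt lam * x) * c₀ +
      Real.sinh (Real.sqrt lam * x) / Real.sqrt lam * c₁ +
      ∫ ξ in (0:ℝ)..x, Real.sinh (Real.sqrt lam * (x - ξ)) / Real.sqrt lam * f ξ)
    (hu' : ∀ x ∈ Icc (0:ℝ) a, HasDerivWithinAt u (u' x) (Icc 0 a) x) :
    ∀ x ∈ Icc (0:ℝ) a,
      lam ^ k * Real.exp (2 * Real.sqrt lam * (a - x)) *
          (u x + u' x / Real.sqrt lam) ^ 2 ≤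
        3 * lam ^ k * (u a) ^ 2 + 3 * lam ^ (k - 1) * (u' a) ^ 2 +
          3 * lam ^ (k - 1) *
            (∫ ξ in x..a, Real.exp (Real.sqrt lam * (a - ξ)) * f ξ) ^ 2 := by
  set s := Real.sqrt lam with hsdef
  have hs : 0 < s := Real.sqrt_pos.mpr hlam
  have hs2 : s ^ 2 = lam := Real.sq_sqrt hlam.le
  have hsne : s ≠ 0 := ne_of_gt hs
  -- auxiliary integrands
  set g₁ : ℝ → ℝ := fun t => Real.exp (-(s * t)) * f t with hg₁def
  set g₂ : ℝ → ℝ := fun t => Real.exp (s * t) * f t with hg₂def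
  have hg₁c : ContinuousOn g₁ (Icc 0 a) :=
    (Real.continuous_exp.comp (continuous_const.mul continuous_id).neg).continuousOn.mul hf
  have hg₂c : ContinuousOn g₂ (Icc 0 a) :=
    (Real.continuous_exp.comp (continuous_const.mul continuous_id)).continuousOn.mul hf
  have hint₁ : ∀ x ∈ Icc (0:ℝ) a, ∀ y ∈ Icc (0:ℝ) a,
      IntervalIntegrable g₁ volume x y := fun x hx y hy =>
    (hg₁c.mono (uIcc_subset_Icc hx hy)).intervalIntegrable
  have hint₂ : ∀ x ∈ Icc (0:ℝ) a, ∀ y ∈ Icc (0:ℝ) a,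
      IntervalIntegrable g₂ volume x y := fun x hx y hy =>
    (hg₂c.mono (uIcc_subset_Icc hx hy)).intervalIntegrable
  have h0 : (0:ℝ) ∈ Icc (0:ℝ) a := left_mem_Icc.mpr ha.le
  have hA : a ∈ Icc (0:ℝ) a := right_mem_Icc.mpr ha.le
  set F : ℝ → ℝ := fun x => ∫ t in (0:ℝ)..x, g₁ t with hFdef
  set G : ℝ → ℝ := fun x => ∫ t in (0:ℝ)..x, g₂ t with hGdef
  -- rewrite u in terms of F, G
  have hU : ∀ x ∈ Icc (0:ℝ) a, u x =
      Real.cosh (s * x) * c₀ + Real.sinh (s * x) / s * c₁ +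
      (Real.exp (s * x) / (2 * s) * F x - Real.exp (-(s * x)) / (2 * s) * G x) := by
    intro x hx
    rw [hu x]
    congr 1
    have heq : (fun ξ => Real.sinh (s * (x - ξ)) / s * f ξ) =
        fun ξ => Real.exp (s * x) / (2 * s) * g₁ ξ - Real.exp (-(s * x)) / (2 * s) * g₂ ξ := by
      funext ξ
      rw [hg₁def, hg₂def]
      simp only
      rw [Real.sinh_eq, show s * (x - ξ) = s * x + -(s * ξ) by ring, Real.exp_add,
        show -(s * x + -(s * ξ)) = -(s * x) + s * ξ by ring, Real.exp_add]
      field_simp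
    rw [heq, intervalIntegral.integral_sub (((hint₁ 0 h0 x hx).const_mul _))
      (((hint₂ 0 h0 x hx).const_mul _)),
      intervalIntegral.integral_const_mul, intervalIntegral.integral_const_mul]
  -- explicit derivative
  set v : ℝ → ℝ := fun x => s * Real.sinh (s * x) * c₀ + Real.cosh (s * x) * c₁ +
      (Real.exp (s * x) / 2 * F x + Real.exp (-(s * x)) / 2 * G x) with hvdef
  have hv : ∀ x ∈ Icc (0:ℝ) a, u' x = v x := by
    intro x hx
    have hF := ftc_helper g₁ hg₁c hx
    have hG := ftc_helper g₂ hg₂c hx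
    have h1 : HasDerivWithinAt (fun y => Real.cosh (s * y) * c₀)
        (s * Real.sinh (s * x) * c₀) (Icc 0 a) x := by
      have := ((Real.hasDerivAt_cosh (s * x)).comp x
        ((hasDerivAt_id x).const_mul s)).hasDerivWithinAt (s := Icc (0:ℝ) a)
      simpa [mul_comm] using this.mul_const c₀
    have h2 : HasDerivWithinAt (fun y => Real.sinh (s * y) / s * c₁)
        (Real.cosh (s * x) * c₁) (Icc 0 a) x := by
      have := (((Real.hasDerivAt_sinh (s * x)).comp x
        ((hasDerivAt_id x).const_mul s)).hasDerivWithinAt (s := Icc (0:ℝ) a)).div_const s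
      have h := this.mul_const c₁
      refine h.congr_deriv ?_
      field_simp
    have h3 : HasDerivWithinAt (fun y => Real.exp (s * y) / (2 * s))
        (Real.exp (s * x) / 2) (Icc 0 a) x := by
      have := ((Real.hasDerivAt_exp (s * x)).comp x
        ((hasDerivAt_id x).const_mul s)).hasDerivWithinAt (s := Icc (0:ℝ) a)
      have h := this.div_const (2 * s)
      refine h.congr_deriv ?_
      field_simp
    have h4 : HasDerivWithinAt (fun y => Real.exp (-(s * y)) / (2 * s))
        (-(Real.exp (-(s * x)) / 2)) (Icc 0 a) x := by
      have := ((Real.hasDerivAt_exp (-(s * x))).comp x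
        (((hasDerivAt_id x).const_mul s).neg)).hasDerivWithinAt (s := Icc (0:ℝ) a)
      have h := this.div_const (2 * s)
      refine h.congr_deriv ?_
      field_simp
    have hee : Real.exp (s * x) * Real.exp (-(s * x)) = 1 := by
      rw [← Real.exp_add]; simp
    have hUd : HasDerivWithinAt (fun y =>
        Real.cosh (s * y) * c₀ + Real.sinh (s * y) / s * c₁ +
        (Real.exp (s * y) / (2 * s) * F y - Real.exp (-(s * y)) / (2 * s) * G y))
        (v x) (Icc 0 a) x := by
      have := (h1.add h2).add ((h3.mul hF).sub (h4.mul hG))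
      refine this.congr_deriv ?_
      rw [hvdef, hg₁def, hg₂def]
      simp only
      field_simp
      nlinarith [hee]
    have hud : HasDerivWithinAt u (v x) (Icc 0 a) x :=
      hUd.congr (fun y hy => hU y hy) (hU x hx)
    exact UniqueDiffWithinAt.eq_deriv _ (uniqueDiffOn_Icc ha x hx) (hu' x hx) hud
  -- the key backward identity
  have key : ∀ x ∈ Icc (0:ℝ) a,
      Real.exp (s * (a - x)) * (u x + u' x / s) =
      Real.exp (s * a) * (c₀ + c₁ / s) + Real.exp (s * a) / s * F x := by
    intro x hx
    rw [hU x hx, hv x hx, hvdef]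
    simp only
    rw [Real.cosh_eq, Real.sinh_eq,
      show s * (a - x) = s * a + -(s * x) by ring, Real.exp_add, Real.exp_neg]
    field_simp
    ring
  intro x hx
  have hIadd : F x + (∫ t in x..a, g₁ t) = F a :=
    intervalIntegral.integral_add_adjacent_intervals (hint₁ 0 h0 x hx) (hint₁ x hx a hA)
  set I : ℝ := ∫ ξ in x..a, Real.exp (s * (a - ξ)) * f ξ with hIdef
  have hIconv : I = Real.exp (s * a) * ∫ t in x..a, g₁ t := by
    rw [hIdef]
    rw [← intervalIntegral.integral_const_mul]
    apply intervalIntegral.integral_congr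
    intro ξ _
    rw [hg₁def]
    simp only
    rw [← mul_assoc, ← Real.exp_add]
    ring_nf
  have hident : Real.exp (s * (a - x)) * (u x + u' x / s) =
      (u a + u' a / s) - I / s := by
    have k1 := key x hx
    have k2 := key a hA
    rw [show s * (a - a) = 0 by ring, Real.exp_zero, one_mul] at k2
    rw [k1, k2, hIconv]
    have : (∫ t in x..a, g₁ t) = F a - F x := by linarith [hIadd]
    rw [this]
    field_simp
    ring
  -- final inequality
  have hexp2 : Real.exp (2 * s * (a - x)) = (Real.exp (s * (a - x))) ^ 2 := by
    rw [sq, ← Real.exp_add]; ring_nf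
  have hlamk : lam ^ k = lam ^ (k - 1) * lam := by
    rw [← pow_succ]
    congr 1
    omega
  have hpow : 0 ≤ lam ^ (k - 1) := pow_nonneg hlam.le _
  have h5 : lam * ((u a + u' a / s) - I / s) ^ 2 = (s * u a + u' a - I) ^ 2 := by
    rw [← hs2]
    field_simp
  have hmain : lam ^ k * Real.exp (2 * s * (a - x)) * (u x + u' x / s) ^ 2 =
      lam ^ (k - 1) * (s * u a + u' a - I) ^ 2 := by
    calc lam ^ k * Real.exp (2 * s * (a - x)) * (u x + u' x / s) ^ 2
        = lam ^ (k - 1) * (lam * (Real.exp (s * (a - x)) * (u x + u' x / s)) ^ 2) := by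
          rw [hlamk, hexp2]; ring
      _ = lam ^ (k - 1) * (lam * ((u a + u' a / s) - I / s) ^ 2) := by rw [hident]
      _ = lam ^ (k - 1) * (s * u a + u' a - I) ^ 2 := by rw [h5]
  rw [hmain]
  have : lam ^ (k - 1) * (s * u a + u' a - I) ^ 2 ≤
      lam ^ (k - 1) * (3 * (s * u a) ^ 2 + 3 * (u' a) ^ 2 + 3 * I ^ 2) := by
    exact mul_le_mul_of_nonneg_left (three_term (s * u a) (u' a) I) hpow
  calc lam ^ (k - 1) * (s * u a + u' a - I) ^ 2 ≤
      lam ^ (k - 1) * (3 * (s * u a) ^ 2 + 3 * (u' a) ^ 2 + 3 * I ^ 2) := this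
    _ = 3 * lam ^ k * (u a) ^ 2 + 3 * lam ^ (k - 1) * (u' a) ^ 2 +
        3 * lam ^ (k - 1) * I ^ 2 := by rw [hlamk, ← hs2]; ring
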